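/- For every integer g ≥ 2, the unique positive root α of x^g + x^{g-1} + ⋯ + x − 1 satisfies 1/2^{g+2} < α − 1/2 < 1/2^{g+1}. -/

import Mathlib

lemma two_mul_lt_pow (g : ℕ) (h : 4 ≤ g) : 2 * (g + 1) < 2 ^ g := by
  induction g, h using Nat.le_induction with
  | base => norm_num
  | succ n hn ih =>
    have h2 : 2 ≤ 2 ^ n := Nat.one_lt_two_pow_iff.mpr (by omega)
    have : 2 ^ (n+1) = 2 ^ n + 2 ^ n := by ring
    omega

lemma aux_lt_two (g : ℕ) (hg : 2 ≤ g) : (1 + (1/2:ℝ)^g)^(g+1) < 2 := by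
  rcases Nat.lt_or_ge g 4 with h4 | h4
  · interval_cases g <;> norm_num
  · set ε : ℝ := (1/2)^g with hε
    have hε0 : 0 < ε := by positivity
    have hε1 : ε ≤ (1/2:ℝ)^4 := by
      apply pow_le_pow_of_le_one (by norm_num) (by norm_num) h4
    have hgε : ((g:ℝ)+1) * ε < 1/2 := by
      have h2 := two_mul_lt_pow g h4
      have h2' : (2:ℝ) * (g+1) < 2^g := by exact_mod_cast h2
      have hpow : ε = 1 / 2^g := by rw [hε]; rw [one_div, inv_pow]; norm_num
      have hp : (0:ℝ) < 2^g := by positivity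
      rw [hpow, mul_one_div, div_lt_iff₀ hp]
      nlinarith
    have hb : 1 - ((g:ℝ)+1)*ε ≤ (1 - ε)^(g+1) := by
      have := one_add_mul_le_pow (a := -ε) (by nlinarith) (g+1)
      push_cast at this
      rw [show (1 + -ε) = 1 - ε from by ring] at this
      linarith [this]
    have h1 : (1+ε)^(g+1)*(1-ε)^(g+1) = (1-ε^2)^(g+1) := by
      rw [← mul_pow]; ring_nf
    have h2 : (1-ε^2)^(g+1) < 1 := by
      apply pow_lt_one₀ (by nlinarith) (by nlinarith) (by omega)
    have hA : 0 < (1+ε)^(g+1) := by positivity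
    have hB : (1/2:ℝ) < (1-ε)^(g+1) := by linarith
    nlinarith [mul_lt_mul_of_pos_left hB hA]

lemma sum_Icc_pow_mul (g : ℕ) (x : ℝ) :
    (x - 1) * (∑ k ∈ Finset.Icc 1 g, x ^ k) = x ^ (g+1) - x := by
  have h1 : Finset.Icc 1 g = Finset.Ico 1 (g+1) := by rw [Finset.Ico_add_one_right_eq_Icc]
  rw [h1, Finset.sum_Ico_eq_sub _ (Nat.le_add_left 1 g)]
  have h2 := geom_sum_mul x (g+1)
  simp only [Finset.sum_range_one, pow_zero]
  linear_combination h2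

lemma sum_mono (g : ℕ) (hg : 1 ≤ g) {a b : ℝ} (ha : 0 ≤ a) (hab : a < b) :
    ∑ k ∈ Finset.Icc 1 g, a ^ k < ∑ k ∈ Finset.Icc 1 g, b ^ k := by
  apply Finset.sum_lt_sum_of_nonempty
  · exact Finset.nonempty_Icc.mpr hg
  · intro k hk
    have hk1 : 1 ≤ k := (Finset.mem_Icc.mp hk).1
    exact pow_lt_pow_left₀ hab ha (by omega)

theorem root_near_half (g : ℕ) (hg : 2 ≤ g) (α : ℝ) (hα : 0 < α)
    (hroot : ∑ k ∈ Finset.Icc 1 g, α ^ k = 1) :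
    1 / 2 ^ (g + 2) < α - 1 / 2 ∧ α - 1 / 2 < 1 / 2 ^ (g + 1) := by
  have hg1 : 1 ≤ g := by omega
  set a : ℝ := 1/2 + 1/2^(g+2) with ha_def
  set b : ℝ := 1/2 + 1/2^(g+1) with hb_def
  clear_value a b
  have hpa : (0:ℝ) < 1/2^(g+2) := by positivity
  have hpb : (0:ℝ) < 1/2^(g+1) := by positivity
  have hsmall_a : (1:ℝ)/2^(g+2) ≤ 1/16 := by
    rw [div_le_div_iff₀ (by positivity) (by norm_num)]
    have : (2:ℝ)^4 ≤ 2^(g+2) := pow_le_pow_right₀ (by norm_num) (by omega)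
    norm_num at this ⊢; linarith
  have hsmall_b : (1:ℝ)/2^(g+1) ≤ 1/8 := by
    rw [div_le_div_iff₀ (by positivity) (by norm_num)]
    have : (2:ℝ)^3 ≤ 2^(g+1) := pow_le_pow_right₀ (by norm_num) (by omega)
    norm_num at this ⊢; linarith
  have ha1 : a < 1 := by rw [ha_def]; linarith
  have hb1 : b < 1 := by rw [hb_def]; linarith
  have ha0 : (0:ℝ) < a := by rw [ha_def]; linarith
  have hb0 : (0:ℝ) < b := by rw [hb_def]; linarith
  -- Sum at a is < 1
  have hSa : ∑ k ∈ Finset.Icc 1 g, a ^ k < 1 := by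
    have hid := sum_Icc_pow_mul g a
    have hhalf : (1/2:ℝ) < a := by rw [ha_def]; linarith
    have hpow : ((1:ℝ)/2)^(g+1) < a^(g+1) :=
      pow_lt_pow_left₀ hhalf (by norm_num) (by omega)
    have h2a : 2*a - 1 = ((1:ℝ)/2)^(g+1) := by
      rw [ha_def]
      have : (2:ℝ)^(g+2) = 2 * 2^(g+1) := by rw [pow_succ]; ring
      rw [div_pow, one_pow]
      field_simp
      rw [this]; ring
    by_contra hcon
    push_neg at hcon
    have hmul : (a-1) * (∑ k ∈ Finset.Icc 1 g, a ^ k) ≤ (a-1) * 1 :=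
      mul_le_mul_of_nonpos_left hcon (by linarith)
    nlinarith [hid, hpow, h2a, hmul]
  -- Sum at b is > 1
  have hSb : 1 < ∑ k ∈ Finset.Icc 1 g, b ^ k := by
    have hid := sum_Icc_pow_mul g b
    have haux := aux_lt_two g hg
    have hbe : b = (1 + (1/2:ℝ)^g) * (1/2) := by
      rw [hb_def, pow_succ]
      field_simp
      rw [mul_add, mul_one, ← mul_pow]; norm_num
    have hpow : b^(g+1) < 2*b - 1 := by
      rw [hbe, mul_pow]
      have h2b : 2*((1 + (1/2:ℝ)^g) * (1/2)) - 1 = 2 * ((1/2:ℝ))^(g+1) := by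
        rw [pow_succ]; ring
      rw [h2b]
      have hp : (0:ℝ) < (1/2:ℝ)^(g+1) := by positivity
      nlinarith [haux, hp]
    by_contra hcon
    push_neg at hcon
    have hmul : (b-1) * 1 ≤ (b-1) * (∑ k ∈ Finset.Icc 1 g, b ^ k) :=
      mul_le_mul_of_nonpos_left hcon (by linarith)
    nlinarith [hid, hpow, hmul]
  -- conclude a < α < b
  have h1 : a < α := by
    by_contra h
    push_neg at h
    rcases eq_or_lt_of_le h with h | h
    · rw [h] at hroot; linarith
    · have := sum_mono g hg1 hα.le h
      rw [hroot] at this; linarith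
  have h2 : α < b := by
    by_contra h
    push_neg at h
    rcases eq_or_lt_of_le h with h | h
    · rw [← h] at hroot; linarith
    · have := sum_mono g hg1 hb0.le h
      rw [hroot] at this; linarith
  constructor
  · rw [ha_def] at h1; linarith
  · rw [hb_def] at h2; linarith
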